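/- (Monotonicity) Under the grounded Laplacian setup, for any two subsets B ⊆ T ⊆ Q of the candidate edge set, H(B) ≤ H(T). -/

import Mathlib

open Matrix Finset

lemma mmatrix_inv_mulVec_nonneg {n : Type} [Fintype n] [DecidableEq n] {M : Matrix n n ℝ}
    (hM : M.PosDef) (hoff : ∀ i j : n, i ≠ j → M i j ≤ 0) {y : n → ℝ} (hy : ∀ i, 0 ≤ y i) :
    ∀ i, 0 ≤ (M⁻¹ *ᵥ y) i := by
  set x := M⁻¹ *ᵥ y with hxdef
  have hMx : M *ᵥ x = y := by
    rw [hxdef, Matrix.mulVec_mulVec, Matrix.mul_nonsing_inv _ hM.det_pos.ne'.isUnit,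
      Matrix.one_mulVec]
  set p : n → ℝ := fun i => max (x i) 0 with hp
  set m : n → ℝ := fun i => max (-(x i)) 0 with hm
  have hpnn : ∀ i, 0 ≤ p i := fun i => le_max_right _ _
  have hmnn : ∀ i, 0 ≤ m i := fun i => le_max_right _ _
  have hpm : ∀ i, p i - m i = x i := by
    intro i
    rcases le_total 0 (x i) with h | h
    · simp [hp, hm, max_eq_left h, max_eq_right (neg_nonpos_of_nonneg h)]
    · simp [hp, hm, max_eq_right h, max_eq_left (neg_nonneg_of_nonpos h)]
  have hpm0 : ∀ i, p i * m i = 0 := by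
    intro i
    rcases le_total 0 (x i) with h | h
    · simp [hm, max_eq_right (neg_nonpos_of_nonneg h)]
    · simp [hp, max_eq_right h]
  have hm0 : m = 0 := by
    by_contra hne
    have hpos : 0 < m ⬝ᵥ (M *ᵥ m) := by
      have := (Matrix.posDef_iff_dotProduct_mulVec.mp hM).2 hne
      simpa using this
    have hmx : m = p - x := by
      funext i
      simp [← hpm i]
    have h1 : m ⬝ᵥ (M *ᵥ p) ≤ 0 := by
      have : m ⬝ᵥ (M *ᵥ p) = ∑ i, ∑ j, m i * (M i j * p j) := by
        simp [dotProduct, Matrix.mulVec, dotProduct, Finset.mul_sum]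
      rw [this]
      refine Finset.sum_nonpos fun i _ => Finset.sum_nonpos fun j _ => ?_
      rcases eq_or_ne i j with rfl | hij
      · have : m i * (M i i * p i) = M i i * (p i * m i) := by ring
        rw [this, hpm0, mul_zero]
      · have := hoff i j (by exact hij)
        have h2 : M i j * p j ≤ 0 := mul_nonpos_of_nonpos_of_nonneg this (hpnn j)
        exact mul_nonpos_of_nonneg_of_nonpos (hmnn i) h2
    have h2 : 0 ≤ m ⬝ᵥ (M *ᵥ x) := by
      rw [hMx]
      exact Finset.sum_nonneg fun i _ => mul_nonneg (hmnn i) (hy i)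
    have h3 : m ⬝ᵥ (M *ᵥ m) ≤ 0 := by
      have : m ⬝ᵥ (M *ᵥ m) = m ⬝ᵥ (M *ᵥ p) - m ⬝ᵥ (M *ᵥ x) := by
        rw [hmx, Matrix.mulVec_sub, dotProduct_sub]
      rw [this]
      linarith
    linarith
  intro i
  have hmi : m i = 0 := by rw [hm0]; rfl
  have : -(x i) ≤ m i := le_max_left _ _
  rw [hmi] at this
  linarith

theorem stmt3 {V : Type} [Fintype V] [DecidableEq V]
    (G : SimpleGraph V) [DecidableRel G.Adj] (hconn : G.Connected)
    (F S0 S1 : Finset V)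
    (hFne : F.Nonempty) (hS1ne : S1.Nonempty)
    (hFS0 : Disjoint F S0) (hFS1 : Disjoint F S1) (hS0S1 : Disjoint S0 S1)
    (hcover : F ∪ S0 ∪ S1 = Finset.univ)
    (LF : Matrix F F ℝ)
    (hLF : LF = (G.lapMatrix ℝ).submatrix (fun i : F => (i : V)) (fun i : F => (i : V)))
    (hPD : LF.PosDef) (hnn : ∀ i j : F, 0 ≤ LF⁻¹ i j)
    (b : F → ℝ)
    (hb : ∀ i : F, b i = ((S1.filter fun a => G.Adj a (i : V)).card : ℝ))
    (Q : Finset (V × V))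
    (hQ : ∀ e ∈ Q, e.1 ∈ S1 ∧ e.2 ∈ F ∧ ¬ G.Adj e.1 e.2)
    (c : Finset (V × V) → F → ℝ)
    (hc : ∀ P, ∀ i : F, c P i = ((P.filter fun e => e.2 = (i : V)).card : ℝ))
    (H : Finset (V × V) → ℝ)
    (hH : ∀ P ⊆ Q, H P = (1 : F → ℝ) ⬝ᵥ ((LF + Matrix.diagonal (c P))⁻¹ *ᵥ (b + c P)))
    (B T : Finset (V × V)) (hBT : B ⊆ T) (hTQ : T ⊆ Q) :
    H B ≤ H T := by
  have hBQ : B ⊆ Q := hBT.trans hTQ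
  -- basic facts about c
  have hcnn : ∀ P, ∀ i : F, 0 ≤ c P i := by
    intro P i; rw [hc]; positivity
  have hcmono : ∀ i : F, c B i ≤ c T i := by
    intro i; rw [hc, hc]
    exact_mod_cast Finset.card_le_card (Finset.filter_subset_filter _ hBT)
  -- off-diagonal entries of LF are nonpositive
  have hoffLF : ∀ i j : F, i ≠ j → LF i j ≤ 0 := by
    intro i j hij
    have hvij : (i : V) ≠ (j : V) := fun h => hij (Subtype.ext h)
    rw [hLF]
    simp only [Matrix.submatrix_apply, SimpleGraph.lapMatrix, SimpleGraph.degMatrix,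
      Matrix.sub_apply, Matrix.diagonal_apply_ne _ hvij, SimpleGraph.adjMatrix_apply]
    split <;> norm_num
  -- the perturbed matrices are positive definite with nonpositive off-diagonal entries
  have hPDP : ∀ P, (LF + Matrix.diagonal (c P)).PosDef := fun P =>
    hPD.add_posSemidef (Matrix.posSemidef_diagonal_iff.mpr fun i => hcnn P i)
  have hoffP : ∀ P, ∀ i j : F, i ≠ j → (LF + Matrix.diagonal (c P)) i j ≤ 0 := by
    intro P i j hij
    simp only [Matrix.add_apply, Matrix.diagonal_apply_ne _ hij, add_zero]
    exact hoffLF i j hij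
  have hsolve : ∀ (N : Matrix F F ℝ), N.PosDef → ∀ v : F → ℝ, N *ᵥ (N⁻¹ *ᵥ v) = v := by
    intro N hN v
    rw [Matrix.mulVec_mulVec, Matrix.mul_nonsing_inv _ hN.det_pos.ne'.isUnit, Matrix.one_mulVec]
  have hsolve' : ∀ (N : Matrix F F ℝ), N.PosDef → ∀ v : F → ℝ, N⁻¹ *ᵥ (N *ᵥ v) = v := by
    intro N hN v
    rw [Matrix.mulVec_mulVec, Matrix.nonsing_inv_mul _ hN.det_pos.ne'.isUnit, Matrix.one_mulVec]
  set MB := LF + Matrix.diagonal (c B) with hMB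
  set MT := LF + Matrix.diagonal (c T) with hMT
  set xB : F → ℝ := MB⁻¹ *ᵥ (b + c B) with hxB
  set xT : F → ℝ := MT⁻¹ *ᵥ (b + c T) with hxT
  -- entry of lapMatrix
  have hentry : ∀ u v : V, (G.lapMatrix ℝ) u v
      = (if u = v then (G.degree v : ℝ) else 0) - (if G.Adj u v then 1 else 0) := by
    intro u v
    simp [SimpleGraph.lapMatrix, SimpleGraph.degMatrix, Matrix.diagonal_apply,
      Matrix.sub_apply]
    split
    · next h => rw [h]
    · rfl
  -- row sums of LF dominate b
  have hrow : ∀ i : F, b i ≤ (LF *ᵥ (1 : F → ℝ)) i := by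
    intro i
    have hmv : (LF *ᵥ (1 : F → ℝ)) i = ∑ j : F, LF i j := by
      simp [Matrix.mulVec, dotProduct]
    have hS : ∀ X : Finset V, (0:ℝ) ≤ ∑ v ∈ X, (if G.Adj (i : V) v then (1:ℝ) else 0) := by
      intro X
      refine Finset.sum_nonneg fun v _ => ?_
      split <;> norm_num
    have hbi : b i = ∑ v ∈ S1, (if G.Adj (i : V) v then (1:ℝ) else 0) := by
      have hfil : (S1.filter fun a => G.Adj a (i : V)) = S1.filter fun v => G.Adj (i : V) v := by
        ext a
        simp only [Finset.mem_filter]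
        exact and_congr_right fun _ => ⟨fun h => h.symm, fun h => h.symm⟩
      rw [hb, hfil, Finset.sum_boole]
    have hdeg : (G.degree (i : V) : ℝ) = ∑ v ∈ Finset.univ, (if G.Adj (i : V) v then (1:ℝ) else 0) := by
      rw [Finset.sum_boole, ← SimpleGraph.neighborFinset_eq_filter]
      rfl
    have hsplit : ∑ v ∈ Finset.univ, (if G.Adj (i : V) v then (1:ℝ) else 0)
        = (∑ v ∈ F, (if G.Adj (i : V) v then (1:ℝ) else 0))
          + (∑ v ∈ S0, (if G.Adj (i : V) v then (1:ℝ) else 0))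
          + (∑ v ∈ S1, (if G.Adj (i : V) v then (1:ℝ) else 0)) := by
      rw [← hcover, Finset.sum_union (Finset.disjoint_union_left.mpr ⟨hFS1, hS0S1⟩),
        Finset.sum_union hFS0]
    have hsumLF : ∑ j : F, LF i j
        = (G.degree (i : V) : ℝ) - ∑ v ∈ F, (if G.Adj (i : V) v then (1:ℝ) else 0) := by
      rw [hLF]
      simp only [Matrix.submatrix_apply]
      rw [show (∑ j : F, (G.lapMatrix ℝ) (i : V) (j : V)) = ∑ v ∈ F, (G.lapMatrix ℝ) (i : V) v
        from (Finset.sum_coe_sort F _)]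
      simp_rw [hentry]
      rw [Finset.sum_sub_distrib, Finset.sum_ite_eq, if_pos i.2]
    rw [hmv, hsumLF, hdeg, hsplit, hbi]
    have := hS S0
    linarith
  -- xB ≤ 1
  have hxBle : ∀ i : F, xB i ≤ 1 := by
    have hone : MB *ᵥ (1 : F → ℝ) = LF *ᵥ (1 : F → ℝ) + c B := by
      rw [hMB, Matrix.add_mulVec]
      congr 1
      funext i
      simp [Matrix.mulVec_diagonal]
    have hrepr : (1 : F → ℝ) - xB = MB⁻¹ *ᵥ (LF *ᵥ (1 : F → ℝ) - b) := by
      have : LF *ᵥ (1 : F → ℝ) - b = MB *ᵥ (1 : F → ℝ) - (b + c B) := by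
        rw [hone]; funext j; simp only [Pi.sub_apply, Pi.add_apply]; ring
      rw [this, Matrix.mulVec_sub, hsolve' MB (hPDP B), hxB]
    intro i
    have hnn' : ∀ j : F, 0 ≤ (MB⁻¹ *ᵥ (LF *ᵥ (1 : F → ℝ) - b)) j :=
      mmatrix_inv_mulVec_nonneg (hPDP B) (hoffP B)
        (fun j => by simpa using sub_nonneg.mpr (hrow j))
    have := hnn' i
    rw [← hrepr] at this
    simpa using this
  -- the difference vector
  have hwnn : ∀ i : F, 0 ≤ ((b + c T) - MT *ᵥ xB) i := by
    intro i
    have hMTxB : MT *ᵥ xB = (b + c B) + fun j : F => (c T j - c B j) * xB j := by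
      have hMT' : MT = MB + Matrix.diagonal (fun j => c T j - c B j) := by
        rw [hMT, hMB, add_assoc, Matrix.diagonal_add]
        congr 2
        funext j
        ring
      rw [hMT', Matrix.add_mulVec, hsolve MB (hPDP B)]
      congr 1
      funext j
      simp [Matrix.mulVec_diagonal]
    rw [hMTxB]
    simp only [Pi.sub_apply, Pi.add_apply]
    have h1 : b i + c T i - (b i + c B i + (c T i - c B i) * xB i)
        = (c T i - c B i) * (1 - xB i) := by ring
    rw [h1]
    exact mul_nonneg (sub_nonneg.mpr (hcmono i)) (sub_nonneg.mpr (hxBle i))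
  -- conclude
  have hdiff : xT - xB = MT⁻¹ *ᵥ ((b + c T) - MT *ᵥ xB) := by
    rw [Matrix.mulVec_sub, hsolve' MT (hPDP T), hxT]
  have hdnn : ∀ i : F, 0 ≤ (xT - xB) i := by
    intro i
    rw [hdiff]
    exact mmatrix_inv_mulVec_nonneg (hPDP T) (hoffP T) hwnn i
  rw [hH B hBQ, hH T hTQ]
  have h1 : (1 : F → ℝ) ⬝ᵥ xB = ∑ i : F, xB i := by simp [dotProduct]
  have h2 : (1 : F → ℝ) ⬝ᵥ xT = ∑ i : F, xT i := by simp [dotProduct]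
  rw [← hxB, ← hxT, h1, h2]
  refine Finset.sum_le_sum fun i _ => ?_
  have := hdnn i
  simp only [Pi.sub_apply] at this
  linarith
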